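/- Let (X_s) be independent random variables in [0,1] with mean μ_{a*}, let μ_0 ≤ μ_{a*} be a threshold, and let μ̂(s) be the mean of the first s variables. Then ∑_{t=1}^{∞} ∑_{s=1}^{t} P( μ̂(s) − μ_{a*} < μ_0 − μ_{a*} − sqrt(2·log(t)/s) ) ≤ π²/6. -/

import Mathlib

open MeasureTheory ProbabilityTheory
open Real
open scoped ENNReal

section FTUCBAux


/-- Hoeffding's lemma, analytic core. -/
lemma hoeffding_core (m : ℝ) (hm0 : 0 ≤ m) (hm1 : m ≤ 1) (x : ℝ) :
    (1 - m) * exp (-(x * m)) + m * exp (x * (1 - m)) ≤ exp (x ^ 2 / 8) := by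
  set h : ℝ → ℝ := fun x => (1 - m) * exp (-(x * m)) + m * exp (x * (1 - m)) with hh
  have hpos : ∀ y, 0 < h y := by
    intro y
    rcases lt_or_ge m 1 with hm | hm
    · have h1 : 0 < (1 - m) * exp (-(y * m)) := mul_pos (by linarith) (exp_pos _)
      have h2 : 0 ≤ m * exp (y * (1 - m)) := mul_nonneg hm0 (exp_pos _).le
      simp only [hh]; linarith
    · have hm' : m = 1 := le_antisymm hm1 hm
      simp [hh, hm']
  have hexp1 : ∀ y : ℝ, HasDerivAt (fun x : ℝ => exp (-(x * m))) (exp (-(y * m)) * (-m)) y := by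
    intro y
    have h0 : HasDerivAt (fun x : ℝ => -(x * m)) (-m) y := by
      have := ((hasDerivAt_id y).mul_const m).neg
      exact this.congr_deriv (by simp)
    exact h0.exp
  have hexp2 : ∀ y : ℝ, HasDerivAt (fun x : ℝ => exp (x * (1 - m)))
      (exp (y * (1 - m)) * (1 - m)) y := by
    intro y
    have h0 : HasDerivAt (fun x : ℝ => x * (1 - m)) (1 - m) y := by
      have := (hasDerivAt_id y).mul_const (1 - m)
      exact this.congr_deriv (by simp)
    exact h0.exp
  set d : ℝ → ℝ := fun x => m * (1 - m) * (exp (x * (1 - m)) - exp (-(x * m))) with hd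
  have hdh : ∀ y, HasDerivAt h (d y) y := by
    intro y
    have := (((hexp1 y).const_mul (1 - m)).add ((hexp2 y).const_mul m))
    convert this using 1
    show d y = _
    simp only [hd]; ring
    all_goals rfl
  set e : ℝ → ℝ := fun x => m * (1 - m) * ((1 - m) * exp (x * (1 - m)) + m * exp (-(x * m)))
    with he
  have hde : ∀ y, HasDerivAt d (e y) y := by
    intro y
    have := ((hexp2 y).sub (hexp1 y)).const_mul (m * (1 - m))
    convert this using 1
    show e y = _
    simp only [he]; ring
    all_goals rfl
  set f1 : ℝ → ℝ := fun x => x / 4 - d x / h x with hf1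
  have hf1deriv : ∀ y, HasDerivAt f1 (1/4 - (e y * h y - d y * d y) / (h y) ^ 2) y := by
    intro y
    have hq : HasDerivAt (fun x => d x / h x)
        ((e y * h y - d y * d y) / (h y) ^ 2) y := (hde y).div (hdh y) (hpos y).ne'
    have hl : HasDerivAt (fun x : ℝ => x / 4) (1/4) y := by
      simpa using (hasDerivAt_id y).div_const 4
    exact hl.sub hq
  have hf1nonneg : ∀ y, 0 ≤ 1/4 - (e y * h y - d y * d y) / (h y) ^ 2 := by
    intro y
    have hy := hpos y
    rw [sub_nonneg, div_le_iff₀ (by positivity)]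
    have key : e y * h y - d y * d y = m * (1 - m) * exp (-(y*m)) * exp (y*(1-m)) := by
      simp only [he, hd, hh]; ring
    rw [key]
    have hexpand : (h y) ^ 2 = ((1 - m) * exp (-(y*m)) + m * exp (y*(1-m))) ^ 2 := by
      simp only [hh]
    rw [hexpand]
    nlinarith [sq_nonneg ((1 - m) * exp (-(y*m)) - m * exp (y*(1-m)))]
  have hf1mono : Monotone f1 :=
    monotone_of_deriv_nonneg (fun y => (hf1deriv y).differentiableAt)
      (fun y => by rw [(hf1deriv y).deriv]; exact hf1nonneg y)
  have hf10 : f1 0 = 0 := by simp [hf1, hd]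
  set f : ℝ → ℝ := fun x => x ^ 2 / 8 - Real.log (h x) with hf
  have hfderiv : ∀ y, HasDerivAt f (f1 y) y := by
    intro y
    have h1 : HasDerivAt (fun x : ℝ => x ^ 2 / 8) (y / 4) y := by
      have := ((hasDerivAt_pow 2 y).div_const 8)
      exact this.congr_deriv (by norm_num; ring)
    have h2 : HasDerivAt (fun x => Real.log (h x)) (d y / h y) y := (hdh y).log (hpos y).ne'
    exact h1.sub h2
  have hfc : Continuous f := by
    rw [continuous_iff_continuousAt]
    exact fun y => (hfderiv y).differentiableAt.continuousAt
  have hfmin : ∀ y, f 0 ≤ f y := by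
    intro y
    rcases le_or_gt 0 y with hy | hy
    · have hmono : MonotoneOn f (Set.Ici 0) := by
        refine monotoneOn_of_deriv_nonneg (convex_Ici 0) hfc.continuousOn
          (fun z _ => (hfderiv z).differentiableAt.differentiableWithinAt) ?_
        intro z hz
        rw [interior_Ici] at hz
        rw [(hfderiv z).deriv]
        calc (0:ℝ) = f1 0 := hf10.symm
          _ ≤ f1 z := hf1mono (le_of_lt hz)
      exact hmono Set.self_mem_Ici hy hy
    · have hanti : AntitoneOn f (Set.Iic 0) := by
        refine antitoneOn_of_deriv_nonpos (convex_Iic 0) hfc.continuousOn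
          (fun z _ => (hfderiv z).differentiableAt.differentiableWithinAt) ?_
        intro z hz
        rw [interior_Iic] at hz
        rw [(hfderiv z).deriv]
        calc f1 z ≤ f1 0 := hf1mono (le_of_lt hz)
          _ = 0 := hf10
      exact hanti hy.le Set.self_mem_Iic hy.le
  have hf0 : f 0 = 0 := by simp [hf, hh]
  have hx : 0 ≤ f x := hf0 ▸ hfmin x
  have hlog : Real.log (h x) ≤ x ^ 2 / 8 := by simp only [hf] at hx; linarith
  calc h x = exp (Real.log (h x)) := (exp_log (hpos x)).symm
    _ ≤ exp (x ^ 2 / 8) := exp_le_exp.mpr hlog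


variable {Ω : Type*} [MeasurableSpace Ω] {μ : Measure Ω} [IsProbabilityMeasure μ]

lemma mgf_sub_mean_le {X : Ω → ℝ} (hX : Measurable X) (hb : ∀ ω, X ω ∈ Set.Icc (0:ℝ) 1)
    {m : ℝ} (hm : ∫ ω, X ω ∂μ = m) (t : ℝ) :
    mgf (fun ω => X ω - m) μ t ≤ exp (t ^ 2 / 8) := by
  have hXint : Integrable X μ := by
    refine (integrable_const (1:ℝ)).mono' hX.aestronglyMeasurable (ae_of_all _ fun ω => ?_)
    rw [Real.norm_eq_abs, abs_le]
    exact ⟨by linarith [(hb ω).1], (hb ω).2⟩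
  have hm0 : 0 ≤ m := hm ▸ integral_nonneg fun ω => (hb ω).1
  have hm1 : m ≤ 1 := by
    rw [← hm]
    calc ∫ ω, X ω ∂μ ≤ ∫ _, (1:ℝ) ∂μ := integral_mono hXint (integrable_const 1) fun ω => (hb ω).2
      _ = 1 := by simp
  -- pointwise convexity bound
  have hconv : ∀ ω, exp (t * X ω) ≤ (1 - X ω) + X ω * exp t := by
    intro ω
    have hx0 := (hb ω).1
    have hx1 := (hb ω).2
    have := convexOn_exp.2 (Set.mem_univ (0:ℝ)) (Set.mem_univ t)
      (by linarith : (0:ℝ) ≤ 1 - X ω) hx0 (by ring)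
    simpa [smul_eq_mul, mul_comm] using this
  have hint_exp : Integrable (fun ω => exp (t * X ω)) μ := by
    refine (integrable_const (exp |t|)).mono'
      ((hX.const_mul t).exp.aestronglyMeasurable) (ae_of_all _ fun ω => ?_)
    rw [Real.norm_eq_abs, abs_exp]
    refine exp_le_exp.mpr ?_
    calc t * X ω ≤ |t * X ω| := le_abs_self _
      _ = |t| * |X ω| := abs_mul _ _
      _ ≤ |t| * 1 := by
          refine mul_le_mul_of_nonneg_left ?_ (abs_nonneg t)
          rw [abs_le]; exact ⟨by linarith [(hb ω).1], (hb ω).2⟩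
      _ = |t| := mul_one _
  have hint_rhs : Integrable (fun ω => (1 - X ω) + X ω * exp t) μ :=
    ((integrable_const (1:ℝ)).sub hXint).add (hXint.mul_const _)
  have hInt : ∫ ω, exp (t * X ω) ∂μ ≤ 1 - m + m * exp t := by
    calc ∫ ω, exp (t * X ω) ∂μ ≤ ∫ ω, ((1 - X ω) + X ω * exp t) ∂μ :=
          integral_mono hint_exp hint_rhs hconv
      _ = 1 - m + m * exp t := by
          have h1 : Integrable (fun ω => 1 - X ω) μ := by
            exact (integrable_const (1:ℝ)).sub hXint
          rw [integral_add h1 (hXint.mul_const _), integral_sub (integrable_const 1) hXint,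
            integral_mul_const, hm]
          simp
  have hmgf : mgf (fun ω => X ω - m) μ t = exp (-(t * m)) * ∫ ω, exp (t * X ω) ∂μ := by
    rw [mgf, ← integral_const_mul]
    congr 1 with ω
    rw [← exp_add]; ring_nf
  rw [hmgf]
  calc exp (-(t * m)) * ∫ ω, exp (t * X ω) ∂μ
      ≤ exp (-(t * m)) * (1 - m + m * exp t) := by
        exact mul_le_mul_of_nonneg_left hInt (exp_pos _).le
    _ = (1 - m) * exp (-(t * m)) + m * exp (t * (1 - m)) := by
        rw [show t * (1 - m) = t + -(t * m) by ring, exp_add]; ring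
    _ ≤ exp (t ^ 2 / 8) := hoeffding_core m hm0 hm1 t

lemma chernoff_sum {X : ℕ → Ω → ℝ} (hmeas : ∀ s, Measurable (X s))
    (hindep : iIndepFun X μ)
    (hbdd : ∀ s ω, X s ω ∈ Set.Icc (0 : ℝ) 1)
    {μa : ℝ} (hmean : ∀ s, ∫ ω, X s ω ∂μ = μa)
    (s : ℕ) (hs : 0 < s) (ε : ℝ) (hε : 0 ≤ ε) :
    μ {ω | (∑ u ∈ Finset.range s, fun ω => X u ω - μa) ω ≤ -(s * ε)}
      ≤ ENNReal.ofReal (exp (-(2 * s * ε ^ 2))) := by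
  set Y : ℕ → Ω → ℝ := fun u ω => X u ω - μa with hY
  have hmeasY : ∀ u, Measurable (Y u) := fun u => (hmeas u).sub_const μa
  have hindepY : iIndepFun Y μ :=
    hindep.comp (fun _ x => x - μa) (fun _ => measurable_id.sub_const μa)
  have hμa0 : 0 ≤ μa := (hmean 0) ▸ integral_nonneg fun ω => (hbdd 0 ω).1
  have hμa1 : μa ≤ 1 := by
    rw [← hmean 0]
    calc ∫ ω, X 0 ω ∂μ ≤ ∫ _, (1:ℝ) ∂μ := by
          refine integral_mono ?_ (integrable_const 1) fun ω => (hbdd 0 ω).2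
          refine (integrable_const (1:ℝ)).mono' (hmeas 0).aestronglyMeasurable
            (ae_of_all _ fun ω => ?_)
          rw [Real.norm_eq_abs, abs_le]
          exact ⟨by linarith [(hbdd 0 ω).1], (hbdd 0 ω).2⟩
      _ = 1 := by simp
  set lam : ℝ := -(4 * ε) with hlam
  have hlamle : lam ≤ 0 := by simp [hlam]; positivity
  have h_int : ∀ u ∈ Finset.range s, Integrable (fun ω => exp (lam * Y u ω)) μ := by
    intro u _
    refine (integrable_const (exp |lam|)).mono'
      (((hmeasY u).const_mul lam).exp.aestronglyMeasurable) (ae_of_all _ fun ω => ?_)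
    rw [Real.norm_eq_abs, abs_exp]
    refine exp_le_exp.mpr ?_
    calc lam * Y u ω ≤ |lam * Y u ω| := le_abs_self _
      _ = |lam| * |Y u ω| := abs_mul _ _
      _ ≤ |lam| * 1 := by
          refine mul_le_mul_of_nonneg_left ?_ (abs_nonneg _)
          rw [abs_le]
          constructor
          · have := (hbdd u ω).1; simp only [hY]; linarith
          · have := (hbdd u ω).2; simp only [hY]; linarith
      _ = |lam| := mul_one _
  have h_int_sum : Integrable (fun ω => exp (lam * (∑ u ∈ Finset.range s, Y u) ω)) μ :=
    hindepY.integrable_exp_mul_sum hmeasY h_int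
  have hcher := measure_le_le_exp_mul_mgf (μ := μ) (X := ∑ u ∈ Finset.range s, Y u)
    (-(s * ε)) hlamle h_int_sum
  have hmgf : mgf (∑ u ∈ Finset.range s, Y u) μ lam ≤ exp (s * lam ^ 2 / 8) := by
    rw [hindepY.mgf_sum hmeasY]
    calc ∏ u ∈ Finset.range s, mgf (Y u) μ lam
        ≤ ∏ _u ∈ Finset.range s, exp (lam ^ 2 / 8) := by
          refine Finset.prod_le_prod (fun u _ => mgf_nonneg) fun u _ => ?_
          exact mgf_sub_mean_le (hmeas u) (hbdd u) (hmean u) lam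
      _ = exp (s * lam ^ 2 / 8) := by
          rw [Finset.prod_const, Finset.card_range, ← Real.exp_nat_mul]
          ring_nf
  have hfinal : exp (-lam * -(s * ε)) * mgf (∑ u ∈ Finset.range s, Y u) μ lam
      ≤ exp (-(2 * s * ε ^ 2)) := by
    calc exp (-lam * -(s * ε)) * mgf (∑ u ∈ Finset.range s, Y u) μ lam
        ≤ exp (-lam * -(s * ε)) * exp (s * lam ^ 2 / 8) :=
          mul_le_mul_of_nonneg_left hmgf (exp_pos _).le
      _ = exp (-(2 * s * ε ^ 2)) := by
          rw [← exp_add]; congr 1; simp only [hlam]; ring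
  have := hcher.trans hfinal
  calc μ {ω | (∑ u ∈ Finset.range s, Y u) ω ≤ -(s * ε)}
      = ENNReal.ofReal ((μ {ω | (∑ u ∈ Finset.range s, Y u) ω ≤ -(s * ε)}).toReal) :=
        (ENNReal.ofReal_toReal (measure_ne_top μ _)).symm
    _ ≤ ENNReal.ofReal (exp (-(2 * s * ε ^ 2))) := ENNReal.ofReal_le_ofReal this


end FTUCBAux

/-- The FT-UCB tail bound: for independent `[0,1]`-valued rewards with mean
`μa` and threshold `μ0 ≤ μa`, the summed probabilities that the empirical
mean falls below `μ0 − sqrt(2 log t / s)` are at most `π²/6`. -/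
theorem ftucb_tail_bound
    {Ω : Type*} [MeasurableSpace Ω] (μ : Measure Ω) [IsProbabilityMeasure μ]
    (X : ℕ → Ω → ℝ)
    (hmeas : ∀ s, Measurable (X s))
    (hindep : iIndepFun X μ)
    (hbdd : ∀ s ω, X s ω ∈ Set.Icc (0 : ℝ) 1)
    (μa : ℝ) (hmean : ∀ s, ∫ ω, X s ω ∂μ = μa)
    (μ0 : ℝ) (hμ0 : μ0 ≤ μa) :
    ∑' t : ℕ, ∑ s ∈ Finset.Icc 1 t,
        μ {ω | (∑ u ∈ Finset.range s, X u ω) / s - μa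
                < μ0 - μa - Real.sqrt (2 * Real.log t / s)}
      ≤ ENNReal.ofReal (Real.pi ^ 2 / 6) := by
  -- per-term bound for 1 ≤ s ≤ t
  have hterm : ∀ t s : ℕ, 1 ≤ s → s ≤ t →
      μ {ω | (∑ u ∈ Finset.range s, X u ω) / s - μa
                < μ0 - μa - Real.sqrt (2 * Real.log t / s)}
        ≤ ENNReal.ofReal (((t:ℝ) ^ 4)⁻¹) := by
    intro t s hs1 hst
    have hs0 : (0:ℝ) < s := by exact_mod_cast hs1
    have ht1 : (1:ℝ) ≤ t := by exact_mod_cast hs1.trans hst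
    have hlogt : 0 ≤ Real.log t := Real.log_nonneg ht1
    set ε : ℝ := Real.sqrt (2 * Real.log t / s) with hε
    have hεnn : 0 ≤ ε := Real.sqrt_nonneg _
    have hεsq : ε ^ 2 = 2 * Real.log t / s := by
      rw [hε, Real.sq_sqrt (by positivity)]
    have hsub : {ω | (∑ u ∈ Finset.range s, X u ω) / s - μa < μ0 - μa - ε}
        ⊆ {ω | (∑ u ∈ Finset.range s, fun ω => X u ω - μa) ω ≤ -(s * ε)} := by
      intro ω hω
      simp only [Set.mem_setOf_eq] at hω ⊢
      rw [Finset.sum_apply, Finset.sum_sub_distrib, Finset.sum_const, Finset.card_range,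
        nsmul_eq_mul]
      have h1 : (∑ u ∈ Finset.range s, X u ω) / s < μa - ε := by linarith
      have h2 : ∑ u ∈ Finset.range s, X u ω < s * (μa - ε) := by
        rw [div_lt_iff₀ hs0] at h1; linarith [h1]
      have : (s : ℝ) * (μa - ε) = s * μa - s * ε := by ring
      nlinarith [h2]
    have hch := chernoff_sum hmeas hindep hbdd hmean s (by omega) ε hεnn
    have hexp : exp (-(2 * s * ε ^ 2)) = ((t:ℝ) ^ 4)⁻¹ := by
      rw [hεsq]
      have hs0' : (s:ℝ) ≠ 0 := hs0.ne'
      have : -(2 * (s:ℝ) * (2 * Real.log t / s)) = Real.log (((t:ℝ) ^ 4)⁻¹) := by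
        rw [Real.log_inv, Real.log_pow]
        field_simp
        ring
      rw [this, Real.exp_log (by positivity)]
    calc μ {ω | (∑ u ∈ Finset.range s, X u ω) / s - μa < μ0 - μa - ε}
        ≤ μ {ω | (∑ u ∈ Finset.range s, fun ω => X u ω - μa) ω ≤ -(s * ε)} := measure_mono hsub
      _ ≤ ENNReal.ofReal (exp (-(2 * s * ε ^ 2))) := hch
      _ = ENNReal.ofReal (((t:ℝ) ^ 4)⁻¹) := by rw [hexp]
  -- per-t bound
  have hrow : ∀ t : ℕ, ∑ s ∈ Finset.Icc 1 t,
      μ {ω | (∑ u ∈ Finset.range s, X u ω) / s - μa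
                < μ0 - μa - Real.sqrt (2 * Real.log t / s)}
      ≤ ENNReal.ofReal (((t:ℝ) ^ 2)⁻¹) := by
    intro t
    rcases Nat.eq_zero_or_pos t with ht0 | ht1
    · subst ht0; simp
    calc ∑ s ∈ Finset.Icc 1 t, μ {ω | (∑ u ∈ Finset.range s, X u ω) / s - μa
                < μ0 - μa - Real.sqrt (2 * Real.log t / s)}
        ≤ ∑ _s ∈ Finset.Icc 1 t, ENNReal.ofReal (((t:ℝ) ^ 4)⁻¹) :=
          Finset.sum_le_sum fun s hs => hterm t s (Finset.mem_Icc.mp hs).1 (Finset.mem_Icc.mp hs).2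
      _ = (t : ℝ≥0∞) * ENNReal.ofReal (((t:ℝ) ^ 4)⁻¹) := by
          rw [Finset.sum_const, Nat.card_Icc]
          simp [nsmul_eq_mul]
      _ = ENNReal.ofReal ((t:ℝ) * ((t:ℝ) ^ 4)⁻¹) := by
          rw [ENNReal.ofReal_mul (by positivity)]
          congr 1
          exact (ENNReal.ofReal_natCast t).symm
      _ ≤ ENNReal.ofReal (((t:ℝ) ^ 2)⁻¹) := by
          refine ENNReal.ofReal_le_ofReal ?_
          have ht1' : (1:ℝ) ≤ t := by exact_mod_cast ht1
          rw [show (t:ℝ) * ((t:ℝ)^4)⁻¹ = ((t:ℝ)^3)⁻¹ by field_simp]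
          refine inv_anti₀ (by positivity) ?_
          calc (t:ℝ)^2 = (t:ℝ)^2 * 1 := by ring
            _ ≤ (t:ℝ)^2 * t := by nlinarith
            _ = (t:ℝ)^3 := by ring
  -- sum up
  have hsummable : Summable (fun t : ℕ => ((t:ℝ) ^ 2)⁻¹) := by
    simpa [one_div] using hasSum_zeta_two.summable
  calc ∑' t : ℕ, ∑ s ∈ Finset.Icc 1 t,
        μ {ω | (∑ u ∈ Finset.range s, X u ω) / s - μa
                < μ0 - μa - Real.sqrt (2 * Real.log t / s)}
      ≤ ∑' t : ℕ, ENNReal.ofReal (((t:ℝ) ^ 2)⁻¹) :=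
        ENNReal.tsum_le_tsum hrow
    _ = ENNReal.ofReal (∑' t : ℕ, ((t:ℝ) ^ 2)⁻¹) :=
        (ENNReal.ofReal_tsum_of_nonneg (fun t => by positivity) hsummable).symm
    _ = ENNReal.ofReal (Real.pi ^ 2 / 6) := by
        congr 1
        have := hasSum_zeta_two.tsum_eq
        simpa [one_div] using this
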